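/- Let P be a parabolic subgroup of W, X = Fix_V(P), Q = Z_W(X^⊥), Y = Fix_V(Q), and N = N_W(P). Then X^⊥ ≤ Y and Y^⊥ ≤ X; the three subspaces X^⊥, X ∩ Y, and Y^⊥ are pairwise orthogonal and their sum is all of V; and each of the three subspaces X^⊥, X ∩ Y, Y^⊥ is mapped onto itself by every element of N. -/

import Mathlib

open scoped RealInnerProductSpace

variable {V : Type*} [NormedAddCommGroup V] [InnerProductSpace ℝ V] [FiniteDimensional ℝ V]

/-- `r` is a reflection: there is a nonzero root `α` with `r α = -α` and `r` fixes
every vector orthogonal to `α`. -/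
def IsReflection (r : V ≃ₗᵢ[ℝ] V) : Prop :=
  ∃ α : V, α ≠ 0 ∧ r α = -α ∧ ∀ v : V, ⟪α, v⟫ = 0 → r v = v

/-- The pointwise stabilizer in `W` of a set `s ⊆ V`. -/
def pointwiseStabilizer (W : Subgroup (V ≃ₗᵢ[ℝ] V)) (s : Set V) : Subgroup (V ≃ₗᵢ[ℝ] V) where
  carrier := {w | w ∈ W ∧ ∀ v ∈ s, w v = v}
  one_mem' := ⟨W.one_mem, fun v _ => rfl⟩
  mul_mem' := fun {a b} ha hb => ⟨W.mul_mem ha.1 hb.1, fun v hv => by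
    have h : (a * b) v = a (b v) := rfl
    rw [h, hb.2 v hv, ha.2 v hv]⟩
  inv_mem' := fun {a} ha => ⟨W.inv_mem ha.1, fun v hv => by
    show a.symm v = v
    conv_lhs => rw [← ha.2 v hv]
    exact a.symm_apply_apply v⟩

/-- The fixed-point subspace of a subgroup `U` of the isometry group of `V`. -/
def fixedSubmodule (U : Subgroup (V ≃ₗᵢ[ℝ] V)) : Submodule ℝ V where
  carrier := {v | ∀ u ∈ U, u v = v}
  zero_mem' := fun u _ => map_zero u
  add_mem' := fun {a b} ha hb u hu => by rw [map_add, ha u hu, hb u hu]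
  smul_mem' := fun c v hv u hu => by rw [map_smul, hv u hu]


section Aux
variable {V : Type*} [NormedAddCommGroup V] [InnerProductSpace ℝ V] [FiniteDimensional ℝ V]

lemma aux_apply_inv (n : V ≃ₗᵢ[ℝ] V) (v : V) : n (n⁻¹ v) = v := n.apply_symm_apply v

lemma aux_inv_apply (n : V ≃ₗᵢ[ℝ] V) (v : V) : n⁻¹ (n v) = v := n.symm_apply_apply v

lemma aux_image_eq (n : V ≃ₗᵢ[ℝ] V) (s : Set V) (h1 : ∀ v ∈ s, n v ∈ s)
    (h2 : ∀ v ∈ s, n⁻¹ v ∈ s) : n '' s = s := by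
  ext v
  constructor
  · rintro ⟨w, hw, rfl⟩; exact h1 w hw
  · intro hv
    exact ⟨n⁻¹ v, h2 v hv, n.apply_symm_apply v⟩

lemma aux_orth_mapsTo (n : V ≃ₗᵢ[ℝ] V) (A : Submodule ℝ V)
    (h : ∀ a ∈ A, n⁻¹ a ∈ A) : ∀ v ∈ Aᗮ, n v ∈ Aᗮ := by
  intro v hv
  rw [Submodule.mem_orthogonal]
  intro a ha
  have h2 : (⟪n (n⁻¹ a), n v⟫ : ℝ) = ⟪n⁻¹ a, v⟫ := n.inner_map_map _ _
  rw [aux_apply_inv] at h2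
  rw [h2]
  exact (Submodule.mem_orthogonal _ _).mp hv _ (h a ha)

lemma aux_fixed_mapsTo (U : Subgroup (V ≃ₗᵢ[ℝ] V)) (n : V ≃ₗᵢ[ℝ] V)
    (h : ∀ p ∈ U, n⁻¹ * p * n ∈ U) :
    ∀ x ∈ fixedSubmodule U, n x ∈ fixedSubmodule U := by
  intro x hx p hp
  have h1 : (n⁻¹ * p * n) x = x := hx _ (h p hp)
  have h2 : (n⁻¹ * p * n) x = n⁻¹ (p (n x)) := rfl
  rw [h2] at h1
  have := congrArg n h1
  rwa [aux_apply_inv] at this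

end Aux

/-- The triple orthogonal decomposition `V = Xᗮ ⊕ (X ⊓ Y) ⊕ Yᗮ` of `N_W(P)`-stable
subspaces, where `X = Fix_V(P)`, `Q = Z_W(Xᗮ)` and `Y = Fix_V(Q)`. -/
theorem triple_orthogonal_decomposition
    (W : Subgroup (V ≃ₗᵢ[ℝ] V))
    (hWfin : (W : Set (V ≃ₗᵢ[ℝ] V)).Finite)
    (hWgen : W = Subgroup.closure {r : V ≃ₗᵢ[ℝ] V | r ∈ W ∧ IsReflection r})
    (P : Subgroup (V ≃ₗᵢ[ℝ] V)) (X₀ : Submodule ℝ V)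
    (hP : P = pointwiseStabilizer W (X₀ : Set V))
    (X : Submodule ℝ V) (hX : X = fixedSubmodule P)
    (Q : Subgroup (V ≃ₗᵢ[ℝ] V)) (hQ : Q = pointwiseStabilizer W ((Xᗮ : Submodule ℝ V) : Set V))
    (Y : Submodule ℝ V) (hY : Y = fixedSubmodule Q)
    (N : Subgroup (V ≃ₗᵢ[ℝ] V)) (hN : N = W ⊓ Subgroup.normalizer (P : Set (V ≃ₗᵢ[ℝ] V))) :
    (Xᗮ ≤ Y ∧ Yᗮ ≤ X) ∧
    (Xᗮ ⟂ (X ⊓ Y) ∧ Xᗮ ⟂ Yᗮ ∧ (X ⊓ Y) ⟂ Yᗮ) ∧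
    (Xᗮ ⊔ (X ⊓ Y) ⊔ Yᗮ = (⊤ : Submodule ℝ V)) ∧
    (∀ n ∈ N,
      (n '' ((Xᗮ : Submodule ℝ V) : Set V) = ((Xᗮ : Submodule ℝ V) : Set V)) ∧
      (n '' ((X ⊓ Y : Submodule ℝ V) : Set V) = ((X ⊓ Y : Submodule ℝ V) : Set V)) ∧
      (n '' ((Yᗮ : Submodule ℝ V) : Set V) = ((Yᗮ : Submodule ℝ V) : Set V))) := by
  subst hX hY hQ hN
  set X : Submodule ℝ V := fixedSubmodule P with hX
  set Q : Subgroup (V ≃ₗᵢ[ℝ] V) := pointwiseStabilizer W ((Xᗮ : Submodule ℝ V) : Set V) with hQ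
  set Y : Submodule ℝ V := fixedSubmodule Q with hY
  -- Xᗮ ≤ Y
  have hXY : Xᗮ ≤ Y := fun v hv q hq => hq.2 v hv
  have hYX : Yᗮ ≤ X := by
    have := Submodule.orthogonal_le hXY
    rwa [Submodule.orthogonal_orthogonal] at this
  refine ⟨⟨hXY, hYX⟩, ?_, ?_, ?_⟩
  · exact ⟨(Submodule.isOrtho_orthogonal_right X).symm.mono_right inf_le_left,
      (Submodule.isOrtho_orthogonal_right X).symm.mono_right hYX,
      (Submodule.isOrtho_orthogonal_right Y).mono_left inf_le_right⟩
  · have hmod : (X ⊓ Y) ⊔ Yᗮ = X ⊓ (Y ⊔ Yᗮ) := inf_sup_assoc_of_le _ hYX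
    rw [sup_assoc, hmod, Submodule.sup_orthogonal_of_hasOrthogonalProjection, inf_top_eq,
      sup_comm, Submodule.sup_orthogonal_of_hasOrthogonalProjection]
  · intro n hn
    have hnW : n ∈ W := hn.1
    have hnN : n ∈ (Subgroup.normalizer (P : Set (V ≃ₗᵢ[ℝ] V))) := hn.2
    have hninvN : n⁻¹ ∈ (Subgroup.normalizer (P : Set (V ≃ₗᵢ[ℝ] V))) := (Subgroup.normalizer (P : Set (V ≃ₗᵢ[ℝ] V))).inv_mem hnN
    -- n '' X = X
    have hXmap : ∀ (m : V ≃ₗᵢ[ℝ] V), m ∈ (Subgroup.normalizer (P : Set (V ≃ₗᵢ[ℝ] V))) →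
        ∀ x ∈ X, m x ∈ X := by
      intro m hm
      exact aux_fixed_mapsTo P m (fun p hp =>
        (Subgroup.mem_normalizer_iff.mp ((Subgroup.normalizer (P : Set (V ≃ₗᵢ[ℝ] V))).inv_mem hm) p).mp hp)
    have hXimg : n '' (X : Set V) = X :=
      aux_image_eq n X (hXmap n hnN) (hXmap n⁻¹ hninvN)
    -- n '' Xᗮ = Xᗮ
    have hXomapsTo : ∀ (m : V ≃ₗᵢ[ℝ] V), m ∈ (Subgroup.normalizer (P : Set (V ≃ₗᵢ[ℝ] V))) → ∀ v ∈ Xᗮ, m v ∈ Xᗮ := by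
      intro m hm
      exact aux_orth_mapsTo m X (hXmap m⁻¹ ((Subgroup.normalizer (P : Set (V ≃ₗᵢ[ℝ] V))).inv_mem hm))
    have hXoimg : n '' ((Xᗮ : Submodule ℝ V) : Set V) = Xᗮ :=
      aux_image_eq n Xᗮ (hXomapsTo n hnN) (hXomapsTo n⁻¹ hninvN)
    -- n normalizes Q
    have hQconj : ∀ (m : V ≃ₗᵢ[ℝ] V), m ∈ W → m ∈ (Subgroup.normalizer (P : Set (V ≃ₗᵢ[ℝ] V))) →
        ∀ q ∈ Q, m⁻¹ * q * m ∈ Q := by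
      intro m hmW hmN q hq
      refine ⟨W.mul_mem (W.mul_mem (W.inv_mem hmW) hq.1) hmW, ?_⟩
      intro v hv
      have hmv : m v ∈ Xᗮ := hXomapsTo m hmN v hv
      have : (m⁻¹ * q * m) v = m⁻¹ (q (m v)) := rfl
      rw [this, hq.2 _ hmv, aux_inv_apply]
    have hYmapsTo : ∀ (m : V ≃ₗᵢ[ℝ] V), m ∈ W → m ∈ (Subgroup.normalizer (P : Set (V ≃ₗᵢ[ℝ] V))) →
        ∀ y ∈ Y, m y ∈ Y := by
      intro m hmW hmN
      exact aux_fixed_mapsTo Q m (hQconj m hmW hmN)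
    have hYimg : n '' (Y : Set V) = Y :=
      aux_image_eq n Y (hYmapsTo n hnW hnN)
        (hYmapsTo n⁻¹ (W.inv_mem hnW) hninvN)
    have hYomapsTo : ∀ (m : V ≃ₗᵢ[ℝ] V), m ∈ W → m ∈ (Subgroup.normalizer (P : Set (V ≃ₗᵢ[ℝ] V))) →
        ∀ v ∈ Yᗮ, m v ∈ Yᗮ := by
      intro m hmW hmN
      exact aux_orth_mapsTo m Y
        (hYmapsTo m⁻¹ (W.inv_mem hmW) ((Subgroup.normalizer (P : Set (V ≃ₗᵢ[ℝ] V))).inv_mem hmN))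
    have hYoimg : n '' ((Yᗮ : Submodule ℝ V) : Set V) = Yᗮ :=
      aux_image_eq n Yᗮ (hYomapsTo n hnW hnN)
        (hYomapsTo n⁻¹ (W.inv_mem hnW) hninvN)
    refine ⟨hXoimg, ?_, hYoimg⟩
    have hinj : Function.Injective n := n.injective
    have : n '' ((X ⊓ Y : Submodule ℝ V) : Set V)
        = n '' (X : Set V) ∩ n '' (Y : Set V) := by
      rw [Submodule.coe_inf]
      exact Set.image_inter hinj
    rw [this, hXimg, hYimg, Submodule.coe_inf]
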